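/- (Linearity of differentiation commutes with explicit Runge-Kutta steps) Consider one step of an explicit k-stage Runge-Kutta method applied to x' = u(t, x) with C¹ vector field u: stages u_j = u(s + c_j h, x + h·Σ_{i<j} a_{j,i} u_i) and output Ψ(x) = x + h·Σ_j b_j u_j. Then the Jacobian ∇_x Ψ(x) coincides with the result of applying the same Runge-Kutta method to the augmented variational system (x' = u(t,x), J' = ∇_x u(t, x)·J) with initial condition J = I, projected onto the J-component. -/

import Mathlib

lemma fderiv_affine_comb {d k : ℕ}
    (F : Fin k → EuclideanSpace ℝ (Fin d) → EuclideanSpace ℝ (Fin d))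
    (hF : ∀ j, Differentiable ℝ (F j)) (r : Fin k → ℝ) (h : ℝ)
    (x : EuclideanSpace ℝ (Fin d)) :
    fderiv ℝ (fun y => y + h • ∑ i, r i • F i y) x
      = ContinuousLinearMap.id ℝ (EuclideanSpace ℝ (Fin d))
        + h • ∑ i, r i • fderiv ℝ (F i) x := by
  have h1 : ∀ i ∈ Finset.univ, DifferentiableAt ℝ (fun y => r i • F i y) x :=
    fun i _ => (hF i x).const_smul (r i)
  have hs : DifferentiableAt ℝ (fun y => ∑ i, r i • F i y) x :=
    DifferentiableAt.fun_sum h1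
  rw [fderiv_fun_add (f := fun y => y) (g := fun y => h • ∑ i, r i • F i y) differentiableAt_fun_id (hs.const_smul h), fderiv_fun_id,
    fderiv_fun_const_smul hs, fderiv_fun_sum h1]
  congr 2
  exact Finset.sum_congr rfl fun i _ => fderiv_fun_const_smul (hF i x) _

/-- Differentiating one explicit Runge-Kutta step in the initial
condition coincides with applying the same scheme to the variational system. -/
theorem rk_step_jacobian_eq_variational_rk
    {d k : ℕ}
    (u : ℝ → EuclideanSpace ℝ (Fin d) → EuclideanSpace ℝ (Fin d))
    (hu : ContDiff ℝ 1 fun p : ℝ × EuclideanSpace ℝ (Fin d) => u p.1 p.2)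
    (A : Fin k → Fin k → ℝ) (b c : Fin k → ℝ)
    (hexp : ∀ j i : Fin k, j ≤ i → A j i = 0)
    (s h : ℝ) (hh : 0 < h)
    (U : Fin k → EuclideanSpace ℝ (Fin d) → EuclideanSpace ℝ (Fin d))
    (hU : ∀ (j : Fin k) (y : EuclideanSpace ℝ (Fin d)),
      U j y = u (s + c j * h) (y + h • ∑ i, A j i • U i y))
    (hUdiff : ∀ j : Fin k, Differentiable ℝ (U j))
    (x : EuclideanSpace ℝ (Fin d))
    (W : Fin k → (EuclideanSpace ℝ (Fin d) →L[ℝ] EuclideanSpace ℝ (Fin d)))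
    (hW : ∀ j : Fin k,
      W j = (fderiv ℝ (u (s + c j * h)) (x + h • ∑ i, A j i • U i x)).comp
        (ContinuousLinearMap.id ℝ (EuclideanSpace ℝ (Fin d)) + h • ∑ i, A j i • W i)) :
    fderiv ℝ (fun y => y + h • ∑ j, b j • U j y) x
      = ContinuousLinearMap.id ℝ (EuclideanSpace ℝ (Fin d)) + h • ∑ j, b j • W j := by
  have hut : ∀ t, Differentiable ℝ (u t) := fun t =>
    by have := (hu.differentiable one_ne_zero).comp ((differentiable_const t).prodMk differentiable_id); exact this
  have key : ∀ n : ℕ, ∀ j : Fin k, (j : ℕ) < n → fderiv ℝ (U j) x = W j := by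
    intro n
    induction n with
    | zero => exact fun j hj => absurd hj (Nat.not_lt_zero _)
    | succ n IH =>
      intro j hj
      set t := s + c j * h with ht
      set g : EuclideanSpace ℝ (Fin d) → EuclideanSpace ℝ (Fin d) :=
        fun y => y + h • ∑ i, A j i • U i y with hg
      have hgdiff : Differentiable ℝ g := by
        exact differentiable_id.add (g := fun y => h • ∑ i, A j i • U i y)
          (by have := (Differentiable.fun_sum (u := Finset.univ) fun i _ => (hUdiff i).const_smul (A j i)).const_smul h; exact this)
      have hUj : U j = fun y => u t (g y) := funext (hU j)
      have hsum : ∑ i, A j i • fderiv ℝ (U i) x = ∑ i, A j i • W i := by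
        refine Finset.sum_congr rfl fun i _ => ?_
        by_cases hij : (i : ℕ) < (j : ℕ)
        · rw [IH i (by omega)]
        · rw [hexp j i (by omega)]; exact (zero_smul ℝ _).trans (zero_smul ℝ (W i)).symm
      have hgfd : fderiv ℝ g x
          = ContinuousLinearMap.id ℝ (EuclideanSpace ℝ (Fin d)) + h • ∑ i, A j i • W i := by
        rw [hg, fderiv_affine_comb _ hUdiff, hsum]
      calc fderiv ℝ (U j) x = fderiv ℝ (u t ∘ g) x := by rw [hUj]; rfl
        _ = (fderiv ℝ (u t) (g x)).comp (fderiv ℝ g x) :=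
            fderiv_comp x (hut t (g x)) (hgdiff x)
        _ = W j := by rw [hgfd, hW j]
  have hsum : ∑ j, b j • fderiv ℝ (U j) x = ∑ j, b j • W j :=
    Finset.sum_congr rfl fun j _ => by rw [key k j j.isLt]
  rw [fderiv_affine_comb _ hUdiff, hsum]
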